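/- arXiv:2312.05940 — 4 statements merged into one kernel-verified Lean document; each statement's English description precedes it below -/
import Mathlib

section
/- Let Ω be an open subset of ℝⁿ, p ∈ [1,∞], and w : (0,∞) → [0,∞) such that w(r) ≠ 0 for all r in some interval (0,r₀) and lim sup_{r→0} w(r) r^{n/p} = +∞. Then the generalized Morrey space M_p^w(Ω) = {0}, i.e. every f ∈ M_p^w(Ω) vanishes almost everywhere in Ω. -/
open MeasureTheory Metric Set Filter ENNReal
open scoped Topology

/-- The (generalized) Morrey quantity `|f|_{ρ,w,p,Ω}`:
`sup_{(x,r) ∈ Ω × (0,ρ)} w(r) ‖f‖_{L^p(B(x,r) ∩ Ω)}`, valued in `ℝ≥0∞`. -/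
noncomputable def morreyNorm {n : ℕ} (Ω : Set (EuclideanSpace ℝ (Fin n)))
    (p : ℝ≥0∞) (w : ℝ → ℝ) (ρ : ℝ≥0∞) (f : EuclideanSpace ℝ (Fin n) → ℝ) : ℝ≥0∞ :=
  ⨆ x ∈ Ω, ⨆ r ∈ {r : ℝ | 0 < r ∧ ENNReal.ofReal r < ρ},
    ENNReal.ofReal (w r) * eLpNorm f p (volume.restrict (ball x r ∩ Ω))

/-- If `w ≠ 0` near `0` and `limsup_{r→0} w(r) r^{n/p} = ∞`, then `M_p^w(Ω)` is trivial. -/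
theorem stmt4 (n : ℕ) (Ω : Set (EuclideanSpace ℝ (Fin n))) (hΩ : IsOpen Ω)
    (p : ℝ≥0∞) (hp : 1 ≤ p) (w : ℝ → ℝ) (hw : ∀ r > (0:ℝ), 0 ≤ w r)
    (hw0 : ∃ r₀ > (0:ℝ), ∀ r ∈ Set.Ioo (0:ℝ) r₀, w r ≠ 0)
    (hlimsup : Filter.limsup
      (fun r : ℝ => ENNReal.ofReal (w r * r ^ ((n : ℝ) / p.toReal)))
      (nhdsWithin 0 (Set.Ioi 0)) = ⊤) :
    ∀ f : EuclideanSpace ℝ (Fin n) → ℝ, Measurable f →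
      morreyNorm Ω p w ⊤ f < ⊤ → f =ᵐ[volume.restrict Ω] 0 := by
  classical
  obtain ⟨r₀, hr₀, hwne⟩ := hw0
  intro f hf hC
  set C : ℝ≥0∞ := morreyNorm Ω p w ⊤ f with hCdef
  set pt : ℝ := p.toReal with hptdef
  have hpt_nonneg : (0:ℝ) ≤ 1 / pt := by positivity
  have hpt_le_one : 1 / pt ≤ 1 := by
    rcases eq_or_ne p ⊤ with h | h
    · simp [hptdef, h]
    · have h1 : (1:ℝ) ≤ pt := by
        rw [hptdef, ← ENNReal.toReal_one]
        exact ENNReal.toReal_mono h hp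
      rw [div_le_one (by linarith)]
      linarith
  set e : ℝ := 1 - 1/pt with hedef
  have he0 : 0 ≤ e := by rw [hedef]; linarith
  set V : ℝ≥0∞ := volume (ball (0 : EuclideanSpace ℝ (Fin n)) 1) with hVdef
  have hV0 : V ≠ 0 := (measure_ball_pos _ _ one_pos).ne'
  have hVtop : V ≠ ⊤ := measure_ball_lt_top.ne
  -- Morrey bound
  have morrey : ∀ y ∈ Ω, ∀ r : ℝ, 0 < r →
      ENNReal.ofReal (w r) * eLpNorm f p (volume.restrict (ball y r ∩ Ω)) ≤ C := by
    intro y hy r hr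
    refine le_trans ?_ (le_biSup
      (fun x => ⨆ r ∈ {r : ℝ | 0 < r ∧ ENNReal.ofReal r < (⊤:ℝ≥0∞)},
        ENNReal.ofReal (w r) * eLpNorm f p (volume.restrict (ball x r ∩ Ω))) hy)
    exact le_biSup
      (fun r => ENNReal.ofReal (w r) * eLpNorm f p (volume.restrict (ball y r ∩ Ω)))
      (⟨hr, ENNReal.ofReal_lt_top⟩ : r ∈ {r : ℝ | 0 < r ∧ ENNReal.ofReal r < (⊤:ℝ≥0∞)})
  -- volume of closed balls
  have hvol : ∀ (y : EuclideanSpace ℝ (Fin n)) (r : ℝ), 0 ≤ r →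
      volume (closedBall y r) = ENNReal.ofReal (r ^ n) * V := by
    intro y r hr
    rw [Measure.addHaar_closedBall volume y hr, finrank_euclideanSpace_fin]
  -- comparison L¹ vs Lᵖ
  have h1p : ∀ (s : Set (EuclideanSpace ℝ (Fin n))),
      (∫⁻ x in s, (‖f x‖₊ : ℝ≥0∞)) ≤
        eLpNorm f p (volume.restrict s) * (volume s) ^ e := by
    intro s
    have h := eLpNorm_le_eLpNorm_mul_rpow_measure_univ (μ := volume.restrict s) hp
      hf.aestronglyMeasurable
    rw [eLpNorm_one_eq_lintegral_enorm] at h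
    simpa [Measure.restrict_apply_univ, hedef, enorm_eq_nnnorm, ← hptdef] using h
  -- basic estimate
  have est : ∀ y ∈ Ω, ∀ r : ℝ, 0 < r →
      ENNReal.ofReal (w r) * (∫⁻ x in ball y r ∩ Ω, (‖f x‖₊ : ℝ≥0∞)) ≤
        C * (ENNReal.ofReal (r ^ n) * V) ^ e := by
    intro y hy r hr
    have hB : volume (ball y r ∩ Ω) ^ e ≤ (ENNReal.ofReal (r ^ n) * V) ^ e := by
      apply ENNReal.rpow_le_rpow _ he0
      rw [← hvol y r hr.le]
      exact measure_mono (inter_subset_left.trans ball_subset_closedBall)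
    calc ENNReal.ofReal (w r) * (∫⁻ x in ball y r ∩ Ω, (‖f x‖₊ : ℝ≥0∞))
        ≤ ENNReal.ofReal (w r) *
          (eLpNorm f p (volume.restrict (ball y r ∩ Ω)) * volume (ball y r ∩ Ω) ^ e) :=
          mul_le_mul_right (h1p _) _
      _ = (ENNReal.ofReal (w r) * eLpNorm f p (volume.restrict (ball y r ∩ Ω))) *
          volume (ball y r ∩ Ω) ^ e := by ring
      _ ≤ C * (ENNReal.ofReal (r ^ n) * V) ^ e :=
          mul_le_mul' (morrey y hy r hr) hB
  -- main local nullity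
  have main : ∀ z ∈ Ω, volume ({x | x ∈ Ω ∧ f x ≠ 0} ∩ ball z (r₀/2)) = 0 := by
    intro z hz
    set δ : ℝ := r₀ / 2 with hδdef
    have hδpos : 0 < δ := by positivity
    have hδlt : δ < r₀ := by rw [hδdef]; linarith
    set S : Set (EuclideanSpace ℝ (Fin n)) := ball z δ ∩ Ω with hSdef
    have hSmeas : MeasurableSet S := (isOpen_ball.inter hΩ).measurableSet
    set g : EuclideanSpace ℝ (Fin n) → ℝ≥0∞ :=
      S.indicator fun x => (‖f x‖₊ : ℝ≥0∞) with hgdef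
    have hgmeas : Measurable g :=
      (hf.nnnorm.coe_nnreal_ennreal).indicator hSmeas
    have hwδ : 0 < w δ := lt_of_le_of_ne (hw δ hδpos) (Ne.symm (hwne δ ⟨hδpos, hδlt⟩))
    have hfp_fin : eLpNorm f p (volume.restrict S) ≠ ⊤ := by
      intro htop
      have h1 := morrey z hz δ hδpos
      rw [hSdef] at htop
      rw [htop, ENNReal.mul_top (by simp [ENNReal.ofReal_eq_zero, not_le, hwδ])] at h1
      exact hC.ne (top_le_iff.1 h1)
    have hgint : (∫⁻ x, g x) ≠ ⊤ := by
      rw [hgdef, lintegral_indicator hSmeas]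
      refine ne_of_lt (lt_of_le_of_lt (h1p S) ?_)
      refine ENNReal.mul_lt_top hfp_fin.lt_top (ENNReal.rpow_lt_top_of_nonneg he0 ?_)
      exact ((measure_mono inter_subset_left).trans_lt measure_ball_lt_top).ne
    have hdiff := (Besicovitch.vitaliFamily
      (volume : Measure (EuclideanSpace ℝ (Fin n)))).ae_tendsto_lintegral_div' hgmeas hgint
    rw [ae_iff] at hdiff
    refine measure_mono_null ?_ hdiff
    rintro y ⟨⟨hyΩ, hfy⟩, hyz⟩
    simp only [mem_setOf_eq]
    intro htend
    have htend' : Tendsto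
        (fun r => (∫⁻ x in closedBall y r, g x) / volume (closedBall y r))
        (𝓝[>] (0:ℝ)) (𝓝 (g y)) :=
      htend.comp (Besicovitch.tendsto_filterAt volume y)
    have hgy : g y = (‖f y‖₊ : ℝ≥0∞) := indicator_of_mem (Set.mem_inter hyz hyΩ) _
    have hgy0 : g y ≠ 0 := by simp [hgy, hfy]
    -- eventual bound
    have hbound : ∀ᶠ r in 𝓝[>] (0:ℝ),
        ENNReal.ofReal (w r * r ^ ((n:ℝ)/pt)) *
          ((∫⁻ x in closedBall y r, g x) / volume (closedBall y r)) ≤ C / V ^ (1/pt) := by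
      filter_upwards [self_mem_nhdsWithin] with r hr
      have hr : (0:ℝ) < r := hr
      set R : ℝ≥0∞ := ENNReal.ofReal (r ^ n) with hRdef
      have hR0 : R ≠ 0 := by
        simp [hRdef, ENNReal.ofReal_eq_zero, not_le, pow_pos hr]
      have hRtop : R ≠ ⊤ := ENNReal.ofReal_ne_top
      set B : ℝ≥0∞ := R * V with hBdef
      have hB0 : B ≠ 0 := by simp [hBdef, hR0, hV0]
      have hBtop : B ≠ ⊤ := by
        simp [hBdef, ENNReal.mul_eq_top, hR0, hRtop, hV0, hVtop]
      have hvolB : volume (closedBall y r) = B := hvol y r hr.le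
      -- key rpow identity
      have hRpow : ENNReal.ofReal (r ^ ((n:ℝ)/pt)) = R ^ (1/pt) := by
        rw [hRdef, ENNReal.ofReal_rpow_of_pos (pow_pos hr n)]
        congr 1
        rw [← Real.rpow_natCast r n, ← Real.rpow_mul hr.le]
        congr 1
        ring
      have hBpow : ENNReal.ofReal (r ^ ((n:ℝ)/pt)) * V ^ (1/pt) = B ^ (1/pt) := by
        rw [hBdef, ENNReal.mul_rpow_of_nonneg _ _ hpt_nonneg, hRpow]
      -- integral bound
      have hI : (∫⁻ x in closedBall y r, g x) ≤ ∫⁻ x in ball y r ∩ Ω, (‖f x‖₊ : ℝ≥0∞) := by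
        rw [hgdef, lintegral_indicator hSmeas, Measure.restrict_restrict hSmeas]
        calc ∫⁻ x in S ∩ closedBall y r, (‖f x‖₊:ℝ≥0∞)
            ≤ ∫⁻ x in (ball y r ∩ Ω) ∪ sphere y r, (‖f x‖₊:ℝ≥0∞) := by
              apply lintegral_mono_set
              rintro x ⟨⟨hx1, hx2⟩, hx3⟩
              rcases lt_or_eq_of_le (mem_closedBall.1 hx3) with h | h
              · exact Or.inl ⟨mem_ball.2 h, hx2⟩
              · exact Or.inr h
          _ ≤ (∫⁻ x in ball y r ∩ Ω, (‖f x‖₊:ℝ≥0∞)) + ∫⁻ x in sphere y r, (‖f x‖₊:ℝ≥0∞) :=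
              lintegral_union_le _ _ _
          _ = ∫⁻ x in ball y r ∩ Ω, (‖f x‖₊:ℝ≥0∞) := by
              rw [setLIntegral_measure_zero _ _
                (Measure.addHaar_sphere_of_ne_zero volume y hr.ne'), add_zero]
      have hwI : ENNReal.ofReal (w r) * (∫⁻ x in closedBall y r, g x) ≤ C * B ^ e :=
        le_trans (mul_le_mul_right hI _) (est y hyΩ r hr)
      rw [hvolB, ENNReal.ofReal_mul (hw r hr),
        ENNReal.le_div_iff_mul_le (Or.inl (ENNReal.rpow_pos (zero_lt_iff.mpr hV0) hVtop).ne')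
          (Or.inr hC.ne)]
      calc ENNReal.ofReal (w r) * ENNReal.ofReal (r ^ ((n:ℝ)/pt)) *
            ((∫⁻ x in closedBall y r, g x) / B) * V ^ (1/pt)
          = (ENNReal.ofReal (w r) * (∫⁻ x in closedBall y r, g x)) *
            ((ENNReal.ofReal (r ^ ((n:ℝ)/pt)) * V ^ (1/pt)) * B⁻¹) := by
            simp only [div_eq_mul_inv]; ring
        _ = (ENNReal.ofReal (w r) * (∫⁻ x in closedBall y r, g x)) * (B ^ (1/pt) * B⁻¹) := by
            rw [hBpow]
        _ ≤ (C * B ^ e) * (B ^ (1/pt) * B⁻¹) := mul_le_mul_left hwI _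
        _ = C * (B ^ e * B ^ (1/pt)) * B⁻¹ := by ring
        _ = C * B * B⁻¹ := by
            rw [← ENNReal.rpow_add e (1/pt) hB0 hBtop,
              (by rw [hedef]; ring : e + 1/pt = (1:ℝ)), ENNReal.rpow_one]
        _ = C := by rw [mul_assoc, ENNReal.mul_inv_cancel hB0 hBtop, mul_one]
    -- contradiction via limsup
    obtain ⟨b, hb0, hba⟩ := exists_between (zero_lt_iff.mpr hgy0)
    have hbtop : b ≠ ⊤ := by
      rw [hgy] at hba; exact (hba.trans ENNReal.coe_lt_top).ne
    have hev : ∀ᶠ r in 𝓝[>] (0:ℝ),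
        b ≤ (∫⁻ x in closedBall y r, g x) / volume (closedBall y r) :=
      (htend'.eventually (eventually_gt_nhds hba)).mono fun r h => h.le
    have hts : (⊤:ℝ≥0∞) ≤ limsup (fun r => ENNReal.ofReal (w r * r ^ ((n:ℝ)/pt)) *
        ((∫⁻ x in closedBall y r, g x) / volume (closedBall y r))) (𝓝[>] (0:ℝ)) := by
      have h1 : limsup (fun r => b * ENNReal.ofReal (w r * r ^ ((n:ℝ)/pt))) (𝓝[>] (0:ℝ))
          = b * ⊤ := by
        rw [limsup_const_mul_of_ne_top hbtop, hlimsup]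
      rw [ENNReal.mul_top hb0.ne'] at h1
      rw [← h1]
      have hmono : (fun r => b * ENNReal.ofReal (w r * r ^ ((n:ℝ)/pt))) ≤ᶠ[𝓝[>] (0:ℝ)]
          (fun r => ENNReal.ofReal (w r * r ^ ((n:ℝ)/pt)) *
            ((∫⁻ x in closedBall y r, g x) / volume (closedBall y r))) := by
        filter_upwards [hev] with r hrr
        calc b * ENNReal.ofReal (w r * r ^ ((n:ℝ)/pt))
            = ENNReal.ofReal (w r * r ^ ((n:ℝ)/pt)) * b := mul_comm _ _
          _ ≤ _ := mul_le_mul_right hrr _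
      exact limsup_le_limsup hmono
    have hle := Filter.limsup_le_of_le (by isBoundedDefault) hbound
    have htop : (⊤:ℝ≥0∞) ≤ C / V ^ (1/pt) := le_trans hts hle
    have hfin : C / V ^ (1/pt) < ⊤ :=
      ENNReal.div_lt_top hC.ne (ENNReal.rpow_pos (zero_lt_iff.mpr hV0) hVtop).ne'
    exact hfin.ne (top_le_iff.1 htop)
  -- conclude
  have key : volume {x | x ∈ Ω ∧ f x ≠ 0} = 0 := by
    apply measure_null_of_locally_null
    intro x hx
    exact ⟨{x | x ∈ Ω ∧ f x ≠ 0} ∩ ball x (r₀/2),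
      inter_mem_nhdsWithin _ (ball_mem_nhds x (by positivity)), main x hx.1⟩
  rw [Filter.EventuallyEq, ae_restrict_iff' hΩ.measurableSet, ae_iff]
  refine measure_mono_null ?_ key
  intro x hx
  simp only [mem_setOf_eq, Pi.zero_apply, Classical.not_imp] at hx ⊢
  exact hx
end

section
/- Let Ω be an open subset of ℝⁿ, and w : (0,∞) → (0,∞) with inf_{r>0} w(r) > 0 and sup_{r>0} w(r) < ∞. Then the vanishing generalized Morrey space M_∞^{w,0}(Ω) equals {0}: every f ∈ M_∞^w(Ω) with lim_{ρ→0} |f|_{ρ,w,∞,Ω} = 0 is zero almost everywhere in Ω. -/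
open MeasureTheory Metric Set Filter ENNReal

/-- If `0 < inf w` and `sup w < ∞`, then the vanishing space `M_∞^{w,0}(Ω)` is trivial. -/
theorem stmt10 (n : ℕ) (Ω : Set (EuclideanSpace ℝ (Fin n))) (hΩ : IsOpen Ω)
    (w : ℝ → ℝ) (hw : ∀ r > (0:ℝ), 0 < w r)
    (hη : 0 < ⨅ r : Set.Ioi (0:ℝ), w r) (hbdd : BddAbove (w '' Set.Ioi 0)) :
    ∀ f : EuclideanSpace ℝ (Fin n) → ℝ, Measurable f →
      morreyNorm Ω ⊤ w ⊤ f < ⊤ →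
      Filter.Tendsto (fun ρ : ℝ => morreyNorm Ω ⊤ w (ENNReal.ofReal ρ) f)
        (nhdsWithin 0 (Set.Ioi 0)) (nhds 0) →
      f =ᵐ[volume.restrict Ω] 0 := by
  intro f hf _ htend
  set η := ⨅ r : Set.Ioi (0:ℝ), w r with hηdef
  have hηle : ∀ r > (0:ℝ), η ≤ w r := by
    intro r hr
    have hbb : BddBelow (Set.range fun r : Set.Ioi (0:ℝ) => w r) := by
      refine ⟨0, ?_⟩
      rintro y ⟨⟨r', hr'⟩, rfl⟩
      exact (hw r' hr').le
    exact ciInf_le hbb ⟨r, hr⟩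
  -- Main step: super-level sets of |f| within Ω are null
  have key : ∀ ε : ℝ, 0 < ε → volume {y | y ∈ Ω ∧ ε < |f y|} = 0 := by
    intro ε hε
    have hεη : (0:ℝ≥0∞) < ENNReal.ofReal (ε * η) := ENNReal.ofReal_pos.2 (mul_pos hε hη)
    have h1 : ∀ᶠ ρ in nhdsWithin 0 (Ioi 0),
        morreyNorm Ω ⊤ w (ENNReal.ofReal ρ) f ≤ ENNReal.ofReal (ε * η) :=
      (ENNReal.tendsto_nhds_zero.mp htend) _ hεη
    obtain ⟨δ, hδ, hδP⟩ := Metric.mem_nhdsWithin_iff.mp h1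
    set r : ℝ := δ/2 with hrdef
    set ρ : ℝ := 3*δ/4 with hρdef
    have hr : 0 < r := by positivity
    have hρpos : 0 < ρ := by positivity
    have hρmem : morreyNorm Ω ⊤ w (ENNReal.ofReal ρ) f ≤ ENNReal.ofReal (ε * η) := by
      apply hδP
      refine ⟨?_, hρpos⟩
      simp only [mem_ball, dist_zero_right, Real.norm_eq_abs, abs_of_pos hρpos]
      rw [hρdef]; linarith
    have hx : ∀ x ∈ Ω, volume ({y | y ∈ Ω ∧ ε < |f y|} ∩ ball x r) = 0 := by
      intro x hxΩ
      have hle : ENNReal.ofReal (w r) * eLpNorm f ⊤ (volume.restrict (ball x r ∩ Ω))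
          ≤ morreyNorm Ω ⊤ w (ENNReal.ofReal ρ) f := by
        refine le_trans ?_
          (le_iSup₂ (f := fun x (_ : x ∈ Ω) =>
            ⨆ r ∈ {r : ℝ | 0 < r ∧ ENNReal.ofReal r < ENNReal.ofReal ρ},
              ENNReal.ofReal (w r) * eLpNorm f ⊤ (volume.restrict (ball x r ∩ Ω))) x hxΩ)
        exact le_iSup₂ (f := fun r (_ : r ∈ {r : ℝ | 0 < r ∧ ENNReal.ofReal r < ENNReal.ofReal ρ}) =>
            ENNReal.ofReal (w r) * eLpNorm f ⊤ (volume.restrict (ball x r ∩ Ω)))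
          r ⟨hr, by rw [ENNReal.ofReal_lt_ofReal_iff hρpos, hrdef, hρdef]; linarith⟩
      have hwr : (0:ℝ) < w r := hw r hr
      have hsn : eLpNorm f ⊤ (volume.restrict (ball x r ∩ Ω)) ≤ ENNReal.ofReal ε := by
        have h2 : ENNReal.ofReal (ε * η) ≤ ENNReal.ofReal (w r) * ENNReal.ofReal ε := by
          rw [← ENNReal.ofReal_mul hwr.le]
          exact ENNReal.ofReal_le_ofReal (by nlinarith [hηle r hr])
        have h3 : ENNReal.ofReal (w r) * eLpNorm f ⊤ (volume.restrict (ball x r ∩ Ω))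
            ≤ ENNReal.ofReal (w r) * ENNReal.ofReal ε := le_trans (le_trans hle hρmem) h2
        exact (ENNReal.mul_le_mul_iff_right (by simp [hwr]) ENNReal.ofReal_ne_top).mp h3
      have hae : ∀ᵐ y ∂(volume.restrict (ball x r ∩ Ω)), |f y| ≤ ε := by
        filter_upwards [ae_le_eLpNormEssSup (f := f) (μ := volume.restrict (ball x r ∩ Ω))]
          with y hy
        have h4 : (‖f y‖₊ : ℝ≥0∞) ≤ ENNReal.ofReal ε := by
          refine le_trans hy ?_
          rw [← eLpNorm_exponent_top (f := f)]
          exact hsn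
        have h5 : ‖f y‖ ≤ ε := by
          rw [← enorm_eq_nnnorm, ← ofReal_norm] at h4
          exact (ENNReal.ofReal_le_ofReal_iff hε.le).mp h4
        rwa [Real.norm_eq_abs] at h5
      have h0 : (volume.restrict (ball x r ∩ Ω)) {y | ε < |f y|} = 0 := by
        rw [ae_iff] at hae
        convert hae using 2
        ext y; simp [not_le]
      rw [Measure.restrict_apply (measurableSet_lt measurable_const hf.abs)] at h0
      refine measure_mono_null ?_ h0
      rintro y ⟨⟨hyΩ, hyε⟩, hyb⟩
      exact ⟨hyε, hyb, hyΩ⟩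
    refine measure_null_of_locally_null _ ?_
    rintro y ⟨hyΩ, -⟩
    exact ⟨{y_1 | y_1 ∈ Ω ∧ ε < |f y_1|} ∩ ball y r,
      Filter.inter_mem self_mem_nhdsWithin (mem_nhdsWithin_of_mem_nhds (ball_mem_nhds y hr)),
      hx y hyΩ⟩
  -- conclude
  have hnull : volume {y | y ∈ Ω ∧ f y ≠ 0} = 0 := by
    refine measure_mono_null (fun y hy => ?_)
      (measure_iUnion_null (s := fun k : ℕ => {y | y ∈ Ω ∧ (1/(k+1):ℝ) < |f y|})
        fun k => key _ (by positivity))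
    obtain ⟨hyΩ, hy0⟩ := hy
    obtain ⟨k, hk⟩ := exists_nat_one_div_lt (abs_pos.2 hy0)
    exact mem_iUnion.2 ⟨k, hyΩ, by exact_mod_cast hk⟩
  refine (ae_restrict_iff' hΩ.measurableSet).mpr ?_
  rw [ae_iff]
  refine measure_mono_null (fun y hy => ?_) hnull
  simp only [mem_setOf_eq, Classical.not_imp, Pi.zero_apply] at hy
  exact ⟨hy.1, hy.2⟩
end

section
/- Let Ω be an open subset of ℝⁿ, p ∈ [1,∞], and w : (0,∞) → [0,∞) not identically zero with lim sup_{r→0} w(r) r^{n/p} > 0. Then M_p^w(Ω) is continuously embedded into L^∞(Ω); in particular ‖f‖_{L^∞(Ω)} ≤ (ω_n^{1/p} lim sup_{r→0} w(r)r^{n/p})^{-1} ‖f‖_{M_p^w(Ω)} for all f ∈ M_p^w(Ω), where ω_n is the measure of the unit ball in ℝⁿ. -/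
open MeasureTheory Metric Set Filter ENNReal Topology

lemma morrey_alg {W a ω M : ℝ≥0∞} (u : ℝ) (n : ℕ)
    (hW : W ≠ 0) (hW' : W ≠ ∞) (ha : a ≠ 0) (ha' : a ≠ ∞) (hω : ω ≠ 0) (hω' : ω ≠ ∞) :
    (W * a ^ ((n : ℝ) * u)) * (ω ^ u * ((a ^ (n : ℝ) * ω)⁻¹ *
      ((M / W) * (a ^ (n : ℝ) * ω) ^ (1 - u)))) = M := by
  set b : ℝ≥0∞ := a ^ (n : ℝ) * ω with hb
  have han0 : a ^ (n : ℝ) ≠ 0 := by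
    simp [ENNReal.rpow_eq_zero_iff, ha, ha']
  have hant : a ^ (n : ℝ) ≠ ∞ := by
    simp [ENNReal.rpow_eq_top_iff, ha, ha']
  have hb0 : b ≠ 0 := mul_ne_zero han0 hω
  have hbt : b ≠ ∞ := ENNReal.mul_ne_top hant hω'
  have h1 : b⁻¹ * b ^ (1 - u) = b ^ (-u) := by
    rw [← ENNReal.rpow_neg_one, ← ENNReal.rpow_add _ _ hb0 hbt]
    ring_nf
  have h2 : b ^ (-u) = a ^ (-((n : ℝ) * u)) * ω ^ (-u) := by
    rw [hb, ENNReal.mul_rpow_of_ne_zero han0 hω, ← ENNReal.rpow_mul]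
    ring_nf
  rw [ENNReal.div_eq_inv_mul]
  calc (W * a ^ ((n : ℝ) * u)) * (ω ^ u * (b⁻¹ *
      ((W⁻¹ * M) * b ^ (1 - u))))
      = (W * W⁻¹) * ((a ^ ((n : ℝ) * u) * (ω ^ u * (b⁻¹ * b ^ (1 - u)))) * M) := by ring
    _ = (a ^ ((n : ℝ) * u) * (ω ^ u * (a ^ (-((n : ℝ) * u)) * ω ^ (-u)))) * M := by
        rw [ENNReal.mul_inv_cancel hW hW', h1, h2, one_mul]
    _ = ((a ^ ((n : ℝ) * u) * a ^ (-((n : ℝ) * u))) * (ω ^ u * ω ^ (-u))) * M := by ring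
    _ = M := by
        rw [← ENNReal.rpow_add _ _ ha ha', ← ENNReal.rpow_add _ _ hω hω']
        simp


/-- If `limsup_{r→0} w(r) r^{n/p} > 0`, then `M_p^w(Ω)` embeds into `L^∞(Ω)`, with
`‖f‖_∞ ≤ (ω_n^{1/p} · limsup)⁻¹ ‖f‖_{M_p^w}`. -/
theorem stmt11 (n : ℕ) (Ω : Set (EuclideanSpace ℝ (Fin n))) (hΩ : IsOpen Ω)
    (p : ℝ≥0∞) (hp : 1 ≤ p) (w : ℝ → ℝ) (hw : ∀ r > (0:ℝ), 0 ≤ w r)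
    (hw0 : ∃ r₀ > (0:ℝ), w r₀ ≠ 0)
    (hpos : 0 < Filter.limsup
      (fun r : ℝ => ENNReal.ofReal (w r * r ^ ((n : ℝ) / p.toReal)))
      (nhdsWithin 0 (Set.Ioi 0))) :
    ∀ f : EuclideanSpace ℝ (Fin n) → ℝ, Measurable f →
      morreyNorm Ω p w ⊤ f < ⊤ →
      MemLp f ⊤ (volume.restrict Ω) ∧
      eLpNorm f ⊤ (volume.restrict Ω) ≤
        ((volume (ball (0 : EuclideanSpace ℝ (Fin n)) 1)) ^ (1 / p.toReal) *
          Filter.limsup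
            (fun r : ℝ => ENNReal.ofReal (w r * r ^ ((n : ℝ) / p.toReal)))
            (nhdsWithin 0 (Set.Ioi 0)))⁻¹ * morreyNorm Ω p w ⊤ f := by
  intro f hf hM
  set u : ℝ := 1 / p.toReal with hu
  set ω : ℝ≥0∞ := volume (ball (0 : EuclideanSpace ℝ (Fin n)) 1) with hω
  set L : ℝ≥0∞ := Filter.limsup
      (fun r : ℝ => ENNReal.ofReal (w r * r ^ ((n : ℝ) / p.toReal)))
      (nhdsWithin 0 (Set.Ioi 0)) with hL
  set M : ℝ≥0∞ := morreyNorm Ω p w ⊤ f with hMdef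
  have hω0 : ω ≠ 0 := (measure_ball_pos volume 0 one_pos).ne'
  have hωt : ω ≠ ∞ := measure_ball_lt_top.ne
  have hu0 : 0 ≤ u := by positivity
  have hu1 : u ≤ 1 := by
    rcases eq_or_ne p ∞ with hptop | hptop
    · simp [hu, hptop]
    · have h1 : 1 ≤ p.toReal := by
        rw [← ENNReal.toReal_one]
        exact ENNReal.toReal_mono hptop hp
      rw [hu, div_le_one (by linarith)]
      linarith
  have hωu : ω ^ u ≠ ∞ := ENNReal.rpow_ne_top_of_nonneg hu0 hωt
  have hωu0 : ω ^ u ≠ 0 := by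
    simp [ENNReal.rpow_eq_zero_iff, hω0, hωt]
  -- the Morrey-norm bound
  have key : ∀ y ∈ Ω, ∀ t : ℝ, 0 < t →
      ENNReal.ofReal (w t) * eLpNorm f p (volume.restrict (ball y t ∩ Ω)) ≤ M := by
    intro y hy t ht
    calc ENNReal.ofReal (w t) * eLpNorm f p (volume.restrict (ball y t ∩ Ω))
        ≤ ⨆ r ∈ {r : ℝ | 0 < r ∧ ENNReal.ofReal r < (⊤ : ℝ≥0∞)},
            ENNReal.ofReal (w r) * eLpNorm f p (volume.restrict (ball y r ∩ Ω)) :=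
          le_biSup (fun r : ℝ => ENNReal.ofReal (w r) *
            eLpNorm f p (volume.restrict (ball y r ∩ Ω)))
            (show t ∈ {r : ℝ | 0 < r ∧ ENNReal.ofReal r < (⊤:ℝ≥0∞)} from
              ⟨ht, ENNReal.ofReal_lt_top⟩)
      _ ≤ M := le_biSup
          (fun x => ⨆ r ∈ {r : ℝ | 0 < r ∧ ENNReal.ofReal r < (⊤ : ℝ≥0∞)},
            ENNReal.ofReal (w r) * eLpNorm f p (volume.restrict (ball x r ∩ Ω))) hy
  have keydiv : ∀ y ∈ Ω, ∀ t : ℝ, 0 < t → 0 < w t →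
      eLpNorm f p (volume.restrict (ball y t ∩ Ω)) ≤ M / ENNReal.ofReal (w t) := by
    intro y hy t ht hwt
    rw [ENNReal.le_div_iff_mul_le (Or.inl (ENNReal.ofReal_pos.2 hwt).ne') (Or.inr hM.ne),
      mul_comm]
    exact key y hy t ht
  -- Hölder
  have holder : ∀ s : Set (EuclideanSpace ℝ (Fin n)), ∫⁻ z in s, (‖f z‖₊ : ℝ≥0∞) ≤
      eLpNorm f p (volume.restrict s) * (volume s) ^ (1 - u) := by
    intro s
    have h := eLpNorm_le_eLpNorm_mul_rpow_measure_univ (μ := volume.restrict s) hp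
      hf.aestronglyMeasurable
    rw [eLpNorm_one_eq_lintegral_enorm] at h
    simp only [Measure.restrict_apply_univ, hu, one_div, ENNReal.toReal_one, inv_one] at h ⊢
    exact h
  -- the main pointwise bound, locally around each point of Ω
  have local_bound : ∀ x ∈ Ω, ∃ ε > (0:ℝ), ball x ε ⊆ Ω ∧
      volume ({y | ¬ ω ^ u * L * (‖f y‖₊ : ℝ≥0∞) ≤ M} ∩ ball x ε) = 0 := by
    intro x hx
    obtain ⟨r₀, hr₀, hwr₀⟩ := hw0
    have hwr₀' : 0 < w r₀ := (hw r₀ hr₀).lt_of_ne (Ne.symm hwr₀)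
    obtain ⟨ε₀, hε₀, hball₀⟩ := Metric.isOpen_iff.1 hΩ x hx
    set ε : ℝ := min (ε₀ / 2) r₀ with hεdef
    have hε : 0 < ε := lt_min (by linarith) hr₀
    have hεΩ : ball x ε ⊆ Ω := by
      refine (ball_subset_ball ?_).trans hball₀
      rw [hεdef]
      exact (min_le_left _ _).trans (by linarith)
    refine ⟨ε, hε, hεΩ, ?_⟩
    -- integrability of the localized function
    have hfin : ∫⁻ z in ball x ε, (‖f z‖₊ : ℝ≥0∞) < ⊤ := by
      have h1 : ball x ε ⊆ ball x r₀ ∩ Ω :=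
        subset_inter (ball_subset_ball (min_le_right _ _)) hεΩ
      calc ∫⁻ z in ball x ε, (‖f z‖₊ : ℝ≥0∞)
          ≤ ∫⁻ z in ball x r₀ ∩ Ω, (‖f z‖₊ : ℝ≥0∞) := lintegral_mono_set h1
        _ ≤ eLpNorm f p (volume.restrict (ball x r₀ ∩ Ω)) * (volume (ball x r₀ ∩ Ω)) ^ (1 - u) :=
            holder _
        _ ≤ (M / ENNReal.ofReal (w r₀)) * (volume (ball x r₀ ∩ Ω)) ^ (1 - u) := by
            gcongr
            exact keydiv x hx r₀ hr₀ hwr₀'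
        _ < ⊤ := by
            refine ENNReal.mul_lt_top ?_ ?_
            · exact ENNReal.div_lt_top hM.ne (ENNReal.ofReal_pos.2 hwr₀').ne'
            · refine ENNReal.rpow_lt_top_of_nonneg (by linarith) ?_
              exact ((measure_mono inter_subset_left).trans_lt measure_ball_lt_top).ne
    set g : EuclideanSpace ℝ (Fin n) → ℝ := fun z => |((ball x ε).indicator f) z| with hg
    have hgi : Integrable g volume := by
      refine (Integrable.abs ?_)
      rw [integrable_indicator_iff measurableSet_ball]
      exact ⟨hf.aestronglyMeasurable.restrict, hfin⟩
    have hdiff := IsUnifLocDoublingMeasure.ae_tendsto_average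
      (μ := (volume : Measure (EuclideanSpace ℝ (Fin n)))) hgi.locallyIntegrable 1
    have hae : ∀ᵐ y ∂(volume : Measure (EuclideanSpace ℝ (Fin n))),
        y ∈ ball x ε → ω ^ u * L * (‖f y‖₊ : ℝ≥0∞) ≤ M := by
      filter_upwards [hdiff] with y hD hyx
      have hyΩ : y ∈ Ω := hεΩ hyx
      have hdist : dist y x < ε := mem_ball.1 hyx
      have htend : Tendsto (fun t => ⨍ z in closedBall y t, g z) (𝓝[>] (0:ℝ)) (𝓝 (g y)) := by
        have := hD (fun _ : ℝ => y) id tendsto_id ?_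
        · exact this
        · filter_upwards [self_mem_nhdsWithin] with t ht
          simp only [mem_closedBall, dist_self, id]
          have ht' : (0:ℝ) < t := ht
          linarith
      have hgy : g y = |f y| := by rw [hg]; simp [indicator_of_mem hyx]
      set X : ℝ≥0∞ := ω ^ u * (‖f y‖₊ : ℝ≥0∞) with hX
      have hXt : X ≠ ∞ := ENNReal.mul_ne_top hωu ENNReal.coe_ne_top
      have hcmain : ∀ c : ℝ≥0∞, c < L → c * X ≤ M := by
        intro c hcL
        rcases eq_or_ne c 0 with rfl | hc0
        · simp
        have hct : c ≠ ∞ := hcL.ne_top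
        have hfreq : ∃ᶠ t in 𝓝[>] (0:ℝ),
            c < ENNReal.ofReal (w t * t ^ ((n : ℝ) / p.toReal)) := by
          apply frequently_lt_of_lt_limsup _ hcL
          exact isCobounded_le_of_bot
        have hev : ∀ᶠ t in 𝓝[>] (0:ℝ), 0 < t ∧ t < ε - dist y x := by
          have h2 : Iio (ε - dist y x) ∈ 𝓝[>] (0:ℝ) :=
            nhdsWithin_le_nhds (Iio_mem_nhds (by linarith))
          filter_upwards [eventually_mem_nhdsWithin, h2] with t ht1 ht2
          exact ⟨ht1, ht2⟩
        have hfreq2 := hfreq.and_eventually hev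
        set P : ℝ → Prop := fun t =>
          c < ENNReal.ofReal (w t * t ^ ((n : ℝ) / p.toReal)) ∧ 0 < t ∧ t < ε - dist y x with hP
        set F : Filter ℝ := 𝓝[>] (0:ℝ) ⊓ 𝓟 {t | P t} with hF
        have hFne : F.NeBot := frequently_iff_neBot.1 hfreq2
        have htendF : Tendsto (fun t => c * (ω ^ u *
            ENNReal.ofReal (⨍ z in closedBall y t, g z))) F (𝓝 (c * X)) := by
          have h1 : Tendsto (fun t => ⨍ z in closedBall y t, g z) F (𝓝 (g y)) :=
            htend.mono_left inf_le_left
          have h2 := ENNReal.tendsto_ofReal h1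
          have h3 : ENNReal.ofReal (g y) = (‖f y‖₊ : ℝ≥0∞) := by
            rw [hgy]; exact (Real.enorm_eq_ofReal_abs (f y)).symm
          rw [h3] at h2
          exact ENNReal.Tendsto.const_mul (ENNReal.Tendsto.const_mul h2 (Or.inr hωu))
            (Or.inr hct)
        have hbF : ∀ᶠ t in F, c * (ω ^ u *
            ENNReal.ofReal (⨍ z in closedBall y t, g z)) ≤ M := by
          rw [hF, eventually_inf_principal]
          refine Eventually.of_forall fun t ht => ?_
          obtain ⟨hct', ht0, htε⟩ := ht
          -- positivity of w t
          have hwtpos : 0 < w t := by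
            have h1 : 0 < ENNReal.ofReal (w t * t ^ ((n : ℝ) / p.toReal)) :=
              (zero_lt_iff.2 hc0).trans hct'
            have h2 : 0 < w t * t ^ ((n : ℝ) / p.toReal) := ENNReal.ofReal_pos.1 h1
            have h3 : 0 < t ^ ((n : ℝ) / p.toReal) := Real.rpow_pos_of_pos ht0 _
            nlinarith
          have hcB : closedBall y t ⊆ ball x ε := closedBall_subset_ball' (by linarith)
          have hbΩ : ball y t ⊆ Ω := (ball_subset_closedBall.trans hcB).trans hεΩ
          set a : ℝ≥0∞ := ENNReal.ofReal t with ha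
          have ha0 : a ≠ 0 := (ENNReal.ofReal_pos.2 ht0).ne'
          have hat : a ≠ ∞ := ENNReal.ofReal_ne_top
          set W : ℝ≥0∞ := ENNReal.ofReal (w t) with hW
          have hW0 : W ≠ 0 := (ENNReal.ofReal_pos.2 hwtpos).ne'
          have hWt : W ≠ ∞ := ENNReal.ofReal_ne_top
          have hvolcB : volume (closedBall y t) = a ^ (n : ℝ) * ω := by
            rw [Measure.addHaar_closedBall volume y ht0.le, ← hω]
            congr 1
            rw [finrank_euclideanSpace_fin, ENNReal.ofReal_pow ht0.le,
              ← ENNReal.rpow_natCast]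
          have hvolball : volume (ball y t ∩ Ω) = a ^ (n : ℝ) * ω := by
            rw [inter_eq_self_of_subset_left hbΩ,
              Measure.addHaar_ball_of_pos volume y ht0, ← hω]
            congr 1
            rw [finrank_euclideanSpace_fin, ENNReal.ofReal_pow ht0.le,
              ← ENNReal.rpow_natCast]
          have hvolpos : (0:ℝ) < (volume (closedBall y t)).toReal := by
            refine ENNReal.toReal_pos ?_ measure_closedBall_lt_top.ne
            exact ((measure_ball_pos volume y ht0).trans_le
              (measure_mono ball_subset_closedBall)).ne'
          -- the average as a lintegral
          have hAint : ENNReal.ofReal (⨍ z in closedBall y t, g z) =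
              (volume (closedBall y t))⁻¹ * ∫⁻ z in closedBall y t, ENNReal.ofReal (g z) := by
            rw [setAverage_eq, smul_eq_mul,
              ENNReal.ofReal_mul (by positivity),
              measureReal_def, ENNReal.ofReal_inv_of_pos hvolpos,
              ENNReal.ofReal_toReal measure_closedBall_lt_top.ne,
              ofReal_integral_eq_lintegral_ofReal (hgi.integrableOn)
                (Eventually.of_forall fun z => abs_nonneg _)]
          have hgf : ∫⁻ z in closedBall y t, ENNReal.ofReal (g z) =
              ∫⁻ z in closedBall y t, (‖f z‖₊ : ℝ≥0∞) := by
            refine setLIntegral_congr_fun measurableSet_closedBall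
              (fun z hz => ?_)
            rw [hg]
            simp only [indicator_of_mem (hcB hz)]; exact (Real.enorm_eq_ofReal_abs (f z)).symm
          have hsph : ∫⁻ z in closedBall y t, (‖f z‖₊ : ℝ≥0∞) =
              ∫⁻ z in ball y t ∩ Ω, (‖f z‖₊ : ℝ≥0∞) := by
            rw [inter_eq_self_of_subset_left hbΩ]
            refine setLIntegral_congr ?_
            rw [ae_eq_set]
            constructor
            · rw [closedBall_diff_ball]
              exact Measure.addHaar_sphere_of_ne_zero volume y ht0.ne'
            · rw [diff_eq_empty.2 ball_subset_closedBall]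
              exact measure_empty
          -- combine
          calc c * (ω ^ u * ENNReal.ofReal (⨍ z in closedBall y t, g z))
              ≤ (W * a ^ ((n : ℝ) * u)) * (ω ^ u * ((a ^ (n : ℝ) * ω)⁻¹ *
                ((M / W) * (a ^ (n : ℝ) * ω) ^ (1 - u)))) := by
                refine mul_le_mul' ?_ (mul_le_mul' le_rfl ?_)
                · refine hct'.le.trans (le_of_eq ?_)
                  have he : (n:ℝ) / p.toReal = (n:ℝ) * u := by rw [hu]; ring
                  rw [he, ENNReal.ofReal_mul (hw t ht0),
                    ENNReal.ofReal_rpow_of_pos ht0]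
                · rw [hAint, hvolcB, hgf, hsph]
                  refine mul_le_mul' le_rfl ?_
                  calc ∫⁻ z in ball y t ∩ Ω, (‖f z‖₊ : ℝ≥0∞)
                      ≤ eLpNorm f p (volume.restrict (ball y t ∩ Ω)) *
                        (volume (ball y t ∩ Ω)) ^ (1 - u) := holder _
                    _ ≤ (M / W) * (a ^ (n : ℝ) * ω) ^ (1 - u) := by
                        rw [hvolball]
                        exact mul_le_mul' (keydiv y hyΩ t ht0 hwtpos) le_rfl
            _ = M := morrey_alg u n hW0 hWt ha0 hat hω0 hωt
        exact le_of_tendsto htendF hbF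
      -- from ∀ c < L to L itself
      have hLX : L * X ≤ M := by
        rcases eq_or_ne X 0 with hX0 | hX0
        · simp [hX0]
        have hdiv : L ≤ M / X := by
          by_contra hcon
          push_neg at hcon
          obtain ⟨c, hc1, hc2⟩ := exists_between hcon
          have := hcmain c hc2
          rw [← ENNReal.le_div_iff_mul_le (Or.inl hX0) (Or.inr hM.ne)] at this
          exact absurd this (not_le.2 hc1)
        exact (ENNReal.le_div_iff_mul_le (Or.inl hX0) (Or.inr hM.ne)).1 hdiv
      calc ω ^ u * L * (‖f y‖₊ : ℝ≥0∞) = L * X := by rw [hX]; ring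
        _ ≤ M := hLX
    rw [ae_iff] at hae
    refine measure_mono_null ?_ hae
    intro y hy
    exact fun hcon => hy.1 (hcon hy.2)
  -- countable cover
  have main : ∀ᵐ y ∂(volume.restrict Ω), ω ^ u * L * (‖f y‖₊ : ℝ≥0∞) ≤ M := by
    choose! ε hε hεΩ hεnull using local_bound
    obtain ⟨T, hTΩ, hTc, hTcov⟩ := TopologicalSpace.countable_cover_nhdsWithin
      (f := fun x => ball x (ε x)) (s := Ω)
      (fun x hx => nhdsWithin_le_nhds (ball_mem_nhds x (hε x hx)))
    rw [ae_iff, Measure.restrict_apply' hΩ.measurableSet]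
    have hsub : {y | ¬ ω ^ u * L * (‖f y‖₊ : ℝ≥0∞) ≤ M} ∩ Ω ⊆
        ⋃ x ∈ T, ({y | ¬ ω ^ u * L * (‖f y‖₊ : ℝ≥0∞) ≤ M} ∩ ball x (ε x)) := by
      intro y hy
      obtain ⟨x, hxT, hyx⟩ := by simpa using hTcov hy.2
      exact mem_biUnion hxT ⟨hy.1, hyx⟩
    refine measure_mono_null hsub ((measure_biUnion_null_iff hTc).2 fun x hxT => ?_)
    exact hεnull x (hTΩ hxT)
  -- final bound
  have bound : eLpNorm f ⊤ (volume.restrict Ω) ≤ (ω ^ u * L)⁻¹ * M := by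
    rw [eLpNorm_exponent_top, eLpNormEssSup]
    refine essSup_le_of_ae_le _ (main.mono fun y hy => ?_)
    rw [← ENNReal.div_eq_inv_mul,
      ENNReal.le_div_iff_mul_le (Or.inl (mul_ne_zero hωu0 hpos.ne')) (Or.inr hM.ne), mul_comm]
    exact hy
  have hCMt : (ω ^ u * L)⁻¹ * M < ⊤ := by
    refine ENNReal.mul_lt_top ?_ hM
    simp only [ENNReal.inv_lt_top]
    exact zero_lt_iff.2 (mul_ne_zero hωu0 hpos.ne')
  exact ⟨⟨hf.aestronglyMeasurable, lt_of_le_of_lt bound hCMt⟩, bound⟩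
end

section
/- Let Ω ⊆ ℝⁿ be open, q ≤ p in [1,∞], and v₁, v₂ : (0,∞) → [0,∞) with v₁v₂ not identically zero. Suppose there exists c ≥ 0 with v₂(r) r^{n/q} ≤ c v₁(r) r^{n/p} for all r > 0. Then M_p^{v₁}(Ω) is continuously embedded into M_q^{v₂}(Ω), with ‖f‖_{M_q^{v₂}(Ω)} ≤ ω_n^{1/q - 1/p} c ‖f‖_{M_p^{v₁}(Ω)}, where ω_n is the Lebesgue measure of the unit ball. -/
open MeasureTheory Metric Set Filter ENNReal

/-- Embedding theorem for generalized Morrey spaces: if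
`v₂(r) r^{n/q} ≤ c v₁(r) r^{n/p}` for all `r > 0` and `q ≤ p`, then
`M_p^{v₁}(Ω)` embeds into `M_q^{v₂}(Ω)` with constant `ω_n^{1/q-1/p} c`. -/
theorem stmt18 (n : ℕ) (Ω : Set (EuclideanSpace ℝ (Fin n))) (hΩ : IsOpen Ω)
    (p q : ℝ≥0∞) (hq : 1 ≤ q) (hqp : q ≤ p)
    (v₁ v₂ : ℝ → ℝ) (hv₁ : ∀ r > (0:ℝ), 0 ≤ v₁ r) (hv₂ : ∀ r > (0:ℝ), 0 ≤ v₂ r)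
    (hv0 : ∃ r₀ > (0:ℝ), v₁ r₀ * v₂ r₀ ≠ 0)
    (c : ℝ) (hc : 0 ≤ c)
    (hineq : ∀ r > (0:ℝ),
      v₂ r * r ^ ((n : ℝ) / q.toReal) ≤ c * (v₁ r * r ^ ((n : ℝ) / p.toReal))) :
    ∀ f : EuclideanSpace ℝ (Fin n) → ℝ, Measurable f →
      morreyNorm Ω p v₁ ⊤ f < ⊤ →
      morreyNorm Ω q v₂ ⊤ f ≤
        (volume (ball (0 : EuclideanSpace ℝ (Fin n)) 1)) ^ (1 / q.toReal - 1 / p.toReal) *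
          ENNReal.ofReal c * morreyNorm Ω p v₁ ⊤ f := by
  intro f hf _
  set ω : ℝ≥0∞ := volume (ball (0 : EuclideanSpace ℝ (Fin n)) 1) with hω
  set e : ℝ := 1 / q.toReal - 1 / p.toReal with he
  -- e ≥ 0
  have he0 : 0 ≤ e := by
    rcases eq_or_ne q ⊤ with hqt | hqt
    · have hpt : p = ⊤ := top_le_iff.mp (hqt ▸ hqp)
      simp [he, hqt, hpt]
    · have hq0 : 0 < q.toReal := ENNReal.toReal_pos (by positivity) hqt
      rcases eq_or_ne p ⊤ with hpt | hpt
      · have h0 : 1 / p.toReal = 0 := by rw [hpt, ENNReal.toReal_top]; norm_num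
        rw [he, h0, sub_zero]
        exact div_nonneg one_pos.le ENNReal.toReal_nonneg
      · have hp0 : 0 < p.toReal := ENNReal.toReal_pos (lt_of_lt_of_le (by norm_num)
          (le_trans hq hqp)).ne' hpt
        have : q.toReal ≤ p.toReal := ENNReal.toReal_mono hpt hqp
        have := one_div_le_one_div_of_le hq0 this
        simp only [he]; linarith
  rw [morreyNorm]
  refine iSup₂_le fun x hx => iSup₂_le fun r hr => ?_
  obtain ⟨hr0, -⟩ := hr
  set μ := volume.restrict (ball x r ∩ Ω) with hμ
  -- Hölder step
  have hHolder : eLpNorm f q μ ≤ eLpNorm f p μ * μ Set.univ ^ e :=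
    eLpNorm_le_eLpNorm_mul_rpow_measure_univ hqp hf.aestronglyMeasurable
  -- measure estimate
  have hvol : μ Set.univ ≤ ENNReal.ofReal (r ^ (n : ℝ)) * ω := by
    have h1 : μ Set.univ = volume (ball x r ∩ Ω) := by
      rw [hμ, Measure.restrict_apply MeasurableSet.univ, Set.univ_inter]
    have h2 : volume (ball x r ∩ Ω) ≤ volume (ball x r) :=
      measure_mono Set.inter_subset_left
    have h3 : volume (ball x r) = ENNReal.ofReal (r ^ (n : ℝ)) * ω := by
      rw [Measure.addHaar_ball_of_pos _ _ hr0, finrank_euclideanSpace, Fintype.card_fin,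
        ← Real.rpow_natCast r n]
    rw [h1, ← h3]; exact h2
  have hmuE : μ Set.univ ^ e ≤ ENNReal.ofReal (r ^ ((n : ℝ) * e)) * ω ^ e := by
    calc μ Set.univ ^ e ≤ (ENNReal.ofReal (r ^ (n : ℝ)) * ω) ^ e :=
          ENNReal.rpow_le_rpow hvol he0
      _ = ENNReal.ofReal (r ^ (n : ℝ)) ^ e * ω ^ e :=
          ENNReal.mul_rpow_of_nonneg _ _ he0
      _ = ENNReal.ofReal (r ^ ((n : ℝ) * e)) * ω ^ e := by
          rw [ENNReal.ofReal_rpow_of_pos (Real.rpow_pos_of_pos hr0 _),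
            ← Real.rpow_mul hr0.le]
  -- weight inequality: v₂ r * r ^ (n * e) ≤ c * v₁ r
  have hw : v₂ r * r ^ ((n : ℝ) * e) ≤ c * v₁ r := by
    have h := hineq r hr0
    have hb : (0:ℝ) < r ^ ((n : ℝ) / p.toReal) := Real.rpow_pos_of_pos hr0 _
    have key : v₂ r * r ^ ((n : ℝ) * e) * r ^ ((n : ℝ) / p.toReal) ≤
        c * v₁ r * r ^ ((n : ℝ) / p.toReal) := by
      have hadd : r ^ ((n : ℝ) * e) * r ^ ((n : ℝ) / p.toReal) =
          r ^ ((n : ℝ) / q.toReal) := by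
        rw [← Real.rpow_add hr0]; congr 1; simp only [he]; ring
      calc v₂ r * r ^ ((n : ℝ) * e) * r ^ ((n : ℝ) / p.toReal)
          = v₂ r * r ^ ((n : ℝ) / q.toReal) := by rw [mul_assoc, hadd]
        _ ≤ c * (v₁ r * r ^ ((n : ℝ) / p.toReal)) := h
        _ = c * v₁ r * r ^ ((n : ℝ) / p.toReal) := by ring
    exact le_of_mul_le_mul_right key hb
  have hwE : ENNReal.ofReal (v₂ r) * ENNReal.ofReal (r ^ ((n : ℝ) * e)) ≤
      ENNReal.ofReal c * ENNReal.ofReal (v₁ r) := by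
    rw [← ENNReal.ofReal_mul (hv₂ r hr0), ← ENNReal.ofReal_mul hc]
    exact ENNReal.ofReal_le_ofReal hw
  -- base p-term bounded by Morrey norm
  have hbase : ENNReal.ofReal (v₁ r) * eLpNorm f p μ ≤ morreyNorm Ω p v₁ ⊤ f := by
    rw [morreyNorm]
    refine le_trans ?_ (le_iSup₂ (f := fun x _ => ⨆ r ∈ {r : ℝ | 0 < r ∧ ENNReal.ofReal r < ⊤},
      ENNReal.ofReal (v₁ r) * eLpNorm f p (volume.restrict (ball x r ∩ Ω))) x hx)
    exact le_iSup₂ (f := fun r _ => ENNReal.ofReal (v₁ r) *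
      eLpNorm f p (volume.restrict (ball x r ∩ Ω))) r ⟨hr0, by simp⟩
  calc ENNReal.ofReal (v₂ r) * eLpNorm f q μ
      ≤ ENNReal.ofReal (v₂ r) * (eLpNorm f p μ * μ Set.univ ^ e) := by gcongr
    _ ≤ ENNReal.ofReal (v₂ r) * (eLpNorm f p μ *
        (ENNReal.ofReal (r ^ ((n : ℝ) * e)) * ω ^ e)) := by gcongr
    _ = ω ^ e * ((ENNReal.ofReal (v₂ r) * ENNReal.ofReal (r ^ ((n : ℝ) * e))) *
        eLpNorm f p μ) := by ring
    _ ≤ ω ^ e * ((ENNReal.ofReal c * ENNReal.ofReal (v₁ r)) * eLpNorm f p μ) := by gcongr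
    _ = ω ^ e * ENNReal.ofReal c * (ENNReal.ofReal (v₁ r) * eLpNorm f p μ) := by ring
    _ ≤ ω ^ e * ENNReal.ofReal c * morreyNorm Ω p v₁ ⊤ f := by gcongr
end
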